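/- Let scale, B_e, B_c, n be positive integers with 2·n·B_e·B_c < scale. If e and c are integer polynomials of degree less than n with coefficient bounds B_e and B_c respectively, and m0, m1 are distinct integers, then the sign of (m0 - m1)·scale + (e·c evaluated at any fixed coefficient index) equals the sign of m0 - m1. -/
import Mathlib

theorem stmt_5 (n : ℕ) (scale Be Bc : ℤ) (hscale : 0 < scale)
    (hBe : 0 < Be) (hBc : 0 < Bc) (hn : 0 < n)
    (hdom : 2 * (n : ℤ) * Be * Bc < scale)
    (e c : Polynomial ℤ) (hde : e.natDegree < n) (hdc : c.natDegree < n)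
    (hbe : ∀ i, |e.coeff i| ≤ Be) (hbc : ∀ i, |c.coeff i| ≤ Bc)
    (m0 m1 : ℤ) (hne : m0 ≠ m1) :
    ∀ k, Int.sign ((m0 - m1) * scale + (e * c).coeff k) = Int.sign (m0 - m1) := by
  intro k
  have hbound : |(e * c).coeff k| ≤ (n : ℤ) * Be * Bc := by
    rw [Polynomial.coeff_mul, Finset.Nat.sum_antidiagonal_eq_sum_range_succ_mk]
    have hsf : ∑ i ∈ Finset.range (k + 1), e.coeff i * c.coeff (k - i)
        = ∑ i ∈ (Finset.range (k + 1)).filter (· < n), e.coeff i * c.coeff (k - i) := by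
      rw [Finset.sum_filter_of_ne]
      intro i _ hne0
      by_contra h
      exact hne0 (by rw [Polynomial.coeff_eq_zero_of_natDegree_lt
        (lt_of_lt_of_le hde (not_lt.mp h)), zero_mul])
    rw [hsf]
    calc |∑ i ∈ (Finset.range (k + 1)).filter (· < n), e.coeff i * c.coeff (k - i)|
        ≤ ∑ i ∈ (Finset.range (k + 1)).filter (· < n), |e.coeff i * c.coeff (k - i)| :=
          Finset.abs_sum_le_sum_abs _ _
      _ ≤ ∑ _i ∈ (Finset.range (k + 1)).filter (· < n), Be * Bc := by
          refine Finset.sum_le_sum fun i _ => ?_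
          rw [abs_mul]
          exact mul_le_mul (hbe i) (hbc (k - i)) (abs_nonneg _) hBe.le
      _ = ((Finset.range (k + 1)).filter (· < n)).card * (Be * Bc) := by
          rw [Finset.sum_const, nsmul_eq_mul]
      _ ≤ (n : ℤ) * Be * Bc := by
          have hcard : ((Finset.range (k + 1)).filter (· < n)).card ≤ n := by
            have : ((Finset.range (k + 1)).filter (· < n)) ⊆ Finset.range n := by
              intro i hi
              simp only [Finset.mem_filter] at hi
              exact Finset.mem_range.mpr hi.2
            simpa using Finset.card_le_card this
          have : (((Finset.range (k + 1)).filter (· < n)).card : ℤ) ≤ (n : ℤ) :=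
            Int.ofNat_le.mpr hcard
          nlinarith [mul_pos hBe hBc]
  have hlt : |(e * c).coeff k| < scale := by
    have h1 : (0:ℤ) ≤ (n : ℤ) * Be * Bc := by positivity
    nlinarith
  set x := (e * c).coeff k with hx
  have habs := abs_lt.mp hlt
  rcases lt_or_gt_of_ne (sub_ne_zero.mpr hne) with h | h
  · have h1 : m0 - m1 ≤ -1 := by omega
    have hneg : (m0 - m1) * scale + x < 0 := by nlinarith
    rw [Int.sign_eq_neg_one_of_neg hneg, Int.sign_eq_neg_one_of_neg h]
  · have h1 : 1 ≤ m0 - m1 := h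
    have hpos : 0 < (m0 - m1) * scale + x := by nlinarith
    rw [Int.sign_eq_one_of_pos hpos, Int.sign_eq_one_of_pos h]
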